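/- Let A ∈ ℝ^{n×n}, B ∈ ℝ^{n×m}, and suppose there exist a symmetric positive definite P ∈ ℝ^{n×n} and scalars η, θ > 0 such that A P + P Aᵀ − η B Bᵀ + θ P ⪯ 0 (negative semidefinite). Set K = −Bᵀ P⁻¹. Then for every real μ ≥ η/2, the matrix A + μ B K is Hurwitz (all eigenvalues have negative real part); in fact (A + μBK)P + P(A + μBK)ᵀ ⪯ −θP. -/

import Mathlib

open Matrix ComplexOrder

lemma psd_map_complex {n : ℕ} {M : Matrix (Fin n) (Fin n) ℝ} (hM : M.PosSemidef) :
    (M.map (Complex.ofReal : ℝ → ℂ)).PosSemidef := by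
  obtain ⟨C, rfl⟩ : ∃ C : Matrix (Fin n) (Fin n) ℝ, M = Cᴴ * C := by
    open MatrixOrder in exact CStarAlgebra.nonneg_iff_eq_star_mul_self.mp hM.nonneg
  have h1 : (Cᴴ * C).map (Complex.ofReal : ℝ → ℂ)
      = (C.map (Complex.ofReal : ℝ → ℂ))ᴴ * C.map (Complex.ofReal : ℝ → ℂ) := by
    rw [show (Complex.ofReal : ℝ → ℂ) = ⇑(Complex.ofRealHom) from rfl, Matrix.map_mul,
      Matrix.conjTranspose_map]
    intro a
    simp
  rw [h1]
  exact posSemidef_conjTranspose_mul_self _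

lemma psd_smul_real {n : ℕ} {M : Matrix (Fin n) (Fin n) ℝ} (hM : M.PosSemidef) {c : ℝ}
    (hc : 0 ≤ c) : (c • M).PosSemidef := by
  refine ⟨?_, fun x => ?_⟩
  · unfold Matrix.IsHermitian at *
    rw [conjTranspose_smul, hM.1]
    simp
  · exact (hM.smul hc).2 x

theorem stmt_10 (n mdim : ℕ) (A : Matrix (Fin n) (Fin n) ℝ)
    (B : Matrix (Fin n) (Fin mdim) ℝ)
    (P : Matrix (Fin n) (Fin n) ℝ) (hP : P.PosDef) (η θ : ℝ)
    (hη : 0 < η) (hθ : 0 < θ)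
    (hLMI : (-(A * P + P * Aᵀ - η • (B * Bᵀ) + θ • P)).PosSemidef)
    (K : Matrix (Fin mdim) (Fin n) ℝ) (hK : K = -(Bᵀ * P⁻¹)) :
    ∀ μ : ℝ, η / 2 ≤ μ →
      (∀ z ∈ spectrum ℂ ((A + μ • (B * K)).map (Complex.ofReal : ℝ → ℂ)), z.re < 0) ∧
      (-((A + μ • (B * K)) * P + P * (A + μ • (B * K))ᵀ + θ • P)).PosSemidef := by
  intro μ hμ
  set M : Matrix (Fin n) (Fin n) ℝ := A + μ • (B * K) with hMdef
  have hdet : IsUnit P.det := hP.det_pos.ne'.isUnit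
  have hQP : P⁻¹ * P = 1 := nonsing_inv_mul P hdet
  have hPQ : P * P⁻¹ = 1 := mul_nonsing_inv P hdet
  have hPsymm : Pᵀ = P := by
    rw [← conjTranspose_eq_transpose_of_trivial]; exact hP.isHermitian
  have hKP : K * P = -Bᵀ := by
    rw [hK, Matrix.neg_mul, Matrix.mul_assoc, hQP, Matrix.mul_one]
  have hMP : M * P = A * P - μ • (B * Bᵀ) := by
    rw [hMdef, Matrix.add_mul, Matrix.smul_mul, Matrix.mul_assoc, hKP, Matrix.mul_neg,
      smul_neg, ← sub_eq_add_neg]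
  have hPMT : P * Mᵀ = P * Aᵀ - μ • (B * Bᵀ) := by
    have h := congrArg Matrix.transpose hMP
    simp only [transpose_mul, transpose_sub, transpose_smul, transpose_transpose,
      hPsymm] at h
    exact h
  have hGpsd : (B * Bᵀ).PosSemidef := by
    have := posSemidef_self_mul_conjTranspose B
    simpa using this
  have hN : -(M * P + P * Mᵀ + θ • P)
      = (-(A * P + P * Aᵀ - η • (B * Bᵀ) + θ • P)) + (2 * μ - η) • (B * Bᵀ) := by
    rw [hMP, hPMT]
    module
  have hNpsd : (-(M * P + P * Mᵀ + θ • P)).PosSemidef := by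
    rw [hN]
    exact hLMI.add (psd_smul_real hGpsd (by linarith))
  refine ⟨?_, hNpsd⟩
  -- eigenvalue part
  have hQH : (P⁻¹)ᴴ = P⁻¹ := hP.inv.isHermitian
  have hSpsd : (P⁻¹ * (-(M * P + P * Mᵀ + θ • P)) * P⁻¹).PosSemidef := by
    have := hNpsd.conjTranspose_mul_mul_same P⁻¹
    rwa [hQH] at this
  have e1 : ∀ X : Matrix (Fin n) (Fin n) ℝ, P⁻¹ * (P * X) = X := by
    intro X; rw [← Matrix.mul_assoc, hQP, Matrix.one_mul]
  have hS : P⁻¹ * (-(M * P + P * Mᵀ + θ • P)) * P⁻¹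
      = -(P⁻¹ * M + Mᵀ * P⁻¹ + θ • P⁻¹) := by
    simp only [Matrix.mul_neg, Matrix.neg_mul, Matrix.mul_add, Matrix.add_mul,
      Matrix.mul_smul, Matrix.smul_mul, Matrix.mul_assoc, hPQ, hQP, e1,
      Matrix.mul_one, Matrix.one_mul]
  rw [hS] at hSpsd
  set f : ℝ → ℂ := (Complex.ofReal : ℝ → ℂ) with hf
  set Mc : Matrix (Fin n) (Fin n) ℂ := M.map f with hMc
  set Qc : Matrix (Fin n) (Fin n) ℂ := (P⁻¹).map f with hQc
  have hScpsd := psd_map_complex hSpsd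
  have hQcpsd : Qc.PosSemidef := psd_map_complex hP.inv.posSemidef
  have hMcH : Mcᴴ = Mᵀ.map f := by
    rw [hMc, ← Matrix.conjTranspose_map f (by intro a; simp [hf]),
      conjTranspose_eq_transpose_of_trivial]
  have hmap : (-(P⁻¹ * M + Mᵀ * P⁻¹ + θ • P⁻¹)).map f
      = -(Qc * Mc + Mcᴴ * Qc + (θ : ℂ) • Qc) := by
    rw [hMcH]
    ext i j
    simp [hf, hMc, hQc, ← hMdef, Matrix.mul_apply, Matrix.map_apply, Matrix.add_apply,
      Matrix.neg_apply, Matrix.smul_apply]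
  rw [hmap] at hScpsd
  intro z hz
  rw [← AlgEquiv.spectrum_eq (Matrix.toLinAlgEquiv' : Matrix (Fin n) (Fin n) ℂ ≃ₐ[ℂ] _),
    ← Module.End.hasEigenvalue_iff_mem_spectrum] at hz
  obtain ⟨v, hv⟩ := hz.exists_hasEigenvector
  have hv0 : v ≠ 0 := hv.2
  have hMv : Mc *ᵥ v = z • v := by
    have := hv.apply_eq_smul
    rwa [Matrix.toLinAlgEquiv'_apply] at this
  set q : ℂ := star v ⬝ᵥ (Qc *ᵥ v) with hq
  have hq0 : 0 ≤ q := hQcpsd.dotProduct_mulVec_nonneg v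
  have hqne : q ≠ 0 := by
    intro h
    have hQv : Qc *ᵥ v = 0 := (hQcpsd.dotProduct_mulVec_zero_iff v).mp h
    apply hv0
    have hone : (P.map f) * Qc = 1 := by
      rw [hQc, hf, show (Complex.ofReal : ℝ → ℂ) = ⇑(Complex.ofRealHom) from rfl,
        ← Matrix.map_mul, hPQ]
      simp
    calc v = ((P.map f) * Qc) *ᵥ v := by rw [hone, Matrix.one_mulVec]
    _ = (P.map f) *ᵥ (Qc *ᵥ v) := by rw [← Matrix.mulVec_mulVec]
    _ = 0 := by rw [hQv, Matrix.mulVec_zero]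
  have hmid : star v ⬝ᵥ (Mcᴴ *ᵥ (Qc *ᵥ v)) = (starRingEnd ℂ) z * q := by
    rw [dotProduct_mulVec, ← star_mulVec, hMv, star_smul, smul_dotProduct, ← hq]
    simp [smul_eq_mul]
  have key : star v ⬝ᵥ ((-(Qc * Mc + Mcᴴ * Qc + (θ : ℂ) • Qc)) *ᵥ v)
      = -((z + (starRingEnd ℂ) z + (θ : ℂ)) * q) := by
    rw [Matrix.neg_mulVec, Matrix.add_mulVec, Matrix.add_mulVec,
      ← Matrix.mulVec_mulVec, ← Matrix.mulVec_mulVec, hMv, Matrix.mulVec_smul,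
      smul_mulVec, dotProduct_neg, dotProduct_add, dotProduct_add,
      dotProduct_smul, dotProduct_smul, hmid, ← hq]
    simp only [smul_eq_mul]
    ring
  have h := hScpsd.dotProduct_mulVec_nonneg v
  rw [key] at h
  have hqim : q.im = 0 := by
    rw [Complex.le_def] at hq0; simpa using hq0.2.symm
  have hqre : 0 < q.re := by
    rw [Complex.le_def] at hq0
    rcases lt_or_eq_of_le hq0.1 with h' | h'
    · simpa using h'
    · exfalso; apply hqne; apply Complex.ext <;> simp [← h', hqim]
  rw [Complex.le_def] at h
  have h1 := h.1
  simp only [Complex.neg_re, Complex.mul_re, Complex.add_re, Complex.add_im,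
    Complex.conj_re, Complex.conj_im, Complex.ofReal_re, Complex.ofReal_im,
    Complex.zero_re, hqim] at h1
  nlinarith [hqre, hθ, h1]
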